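/- Fix an integer α ≥ 2 and define the sequence (τ_p) by τ₁ = 1 and τ_{p+1} being the unique positive real root of x^α - x^{α-1} - τ_p^α = 0. Then for all integers p ≥ 1, τ_p ≥ (p + α - 1)/α. -/

import Mathlib

/-- Key inequality via weighted AM-GM: `(c + 1/α)^α - (c + 1/α)^(α-1) ≤ c^α` for `c ≥ 1`. -/
lemma tau_amgm (α : ℕ) (hα : 2 ≤ α) (c : ℝ) (hc : 1 ≤ c) :
    (c + 1/α) ^ α - (c + 1/α) ^ (α - 1) ≤ c ^ α := by
  have hα0 : (0:ℝ) < α := by positivity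
  set a : ℝ := c + 1/α with ha
  clear_value a
  have hi : (0:ℝ) < 1/α := by positivity
  have ha1 : 1 ≤ a := by rw [ha]; linarith
  have hb : 0 < a - 1 := by
    have ha' : a = c + 1/↑α := ha
    linarith
  have hsplit : a ^ α - a ^ (α - 1) = a ^ (α - 1) * (a - 1) := by
    have : a ^ α = a ^ (α - 1) * a := by
      rw [← pow_succ]
      congr 1
      omega
    rw [this]; ring
  rw [hsplit]
  have hα1 : (1:ℝ) ≤ α := by exact_mod_cast Nat.one_le_of_lt hα
  have hw1 : (0:ℝ) ≤ ((α:ℝ) - 1) / α := div_nonneg (by linarith) hα0.le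
  have hw2 : (0:ℝ) ≤ 1 / α := by positivity
  have hsum : ((α:ℝ) - 1) / α + 1 / α = 1 := by
    field_simp
    ring
  have hgm := Real.geom_mean_le_arith_mean2_weighted hw1 hw2
    (le_trans zero_le_one ha1) hb.le hsum
  -- hgm : a ^ (((α:ℝ)-1)/α) * (a-1) ^ ((1:ℝ)/α) ≤ ((α:ℝ)-1)/α * a + 1/α * (a-1)
  have hrhs : ((α:ℝ) - 1) / α * a + 1 / α * (a - 1) = c := by
    have hinv : (α:ℝ) * (1 / α) = 1 := mul_one_div_cancel hα0.ne'
    field_simp [ha]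
    linear_combination (α:ℝ) * ha + hinv
  rw [hrhs] at hgm
  have hlhs0 : 0 ≤ a ^ (((α:ℝ) - 1) / α) * (a - 1) ^ ((1:ℝ) / α) := by
    apply mul_nonneg <;> exact Real.rpow_nonneg (by linarith) _
  have := pow_le_pow_left₀ hlhs0 hgm α
  calc a ^ (α - 1) * (a - 1)
      = (a ^ (((α:ℝ) - 1) / α) * (a - 1) ^ ((1:ℝ) / α)) ^ α := by
        rw [← Real.rpow_natCast (_ * _) α, Real.mul_rpow (Real.rpow_nonneg (by linarith) _)
          (Real.rpow_nonneg hb.le _), ← Real.rpow_natCast a (α-1),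
          ← Real.rpow_mul (by linarith : (0:ℝ) ≤ a), ← Real.rpow_mul hb.le]
        have h1 : ((α:ℝ) - 1) / α * α = ((α - 1 : ℕ) : ℝ) := by
          have : ((α - 1 : ℕ) : ℝ) = (α:ℝ) - 1 := by
            have : 1 ≤ α := by omega
            push_cast [this]; ring
          rw [this]; field_simp
        have h2 : (1:ℝ) / α * α = 1 := by field_simp
        rw [h1, h2, Real.rpow_one]
    _ ≤ c ^ α := this

/-- If `t > 0` and `c^α ≤ t^α - t^(α-1)` with `c ≥ 1`, then `t ≥ c + 1/α`. -/
lemma tau_root_ge (α : ℕ) (hα : 2 ≤ α) (c t : ℝ) (hc : 1 ≤ c) (ht : 0 < t)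
    (heq : c ^ α ≤ t ^ α - t ^ (α - 1)) : c + 1/α ≤ t := by
  have hsplit : ∀ x : ℝ, x ^ α - x ^ (α - 1) = x ^ (α - 1) * (x - 1) := by
    intro x
    have : x ^ α = x ^ (α - 1) * x := by
      rw [← pow_succ]; congr 1; omega
    rw [this]; ring
  have hc0 : (0:ℝ) < c ^ α := by positivity
  have ht1 : 1 < t := by
    by_contra h
    push_neg at h
    have : t ^ α - t ^ (α - 1) ≤ 0 := by
      rw [hsplit]
      apply mul_nonpos_of_nonneg_of_nonpos
      · positivity
      · linarith
    linarith
  by_contra h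
  push_neg at h
  -- h : t < c + 1/α ; then f(t) < f(c+1/α) ≤ c^α ≤ f(t), contradiction
  have hmono : t ^ α - t ^ (α - 1) < (c + 1/α) ^ α - (c + 1/α) ^ (α - 1) := by
    rw [hsplit, hsplit]
    apply mul_lt_mul' (pow_le_pow_left₀ (by linarith) h.le _) (by linarith)
      (by linarith) (pow_pos (by positivity) _)
  have hkey := tau_amgm α hα c hc
  linarith

/-- If `τ 1 = 1` and for every `p ≥ 1`, `τ (p+1)` is the (unique) positive real
root of `x^α - x^(α-1) - (τ p)^α = 0`, then `τ p ≥ (p + α - 1)/α` for all `p ≥ 1`. -/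
theorem tau_lower_bound (α : ℕ) (hα : 2 ≤ α) (τ : ℕ → ℝ) (h1 : τ 1 = 1)
    (hrec : ∀ p : ℕ, 1 ≤ p →
      0 < τ (p + 1) ∧ τ (p + 1) ^ α - τ (p + 1) ^ (α - 1) - τ p ^ α = 0) :
    ∀ p : ℕ, 1 ≤ p → ((p : ℝ) + α - 1) / α ≤ τ p := by
  have hα0 : (0:ℝ) < α := by positivity
  intro p hp
  induction p with
  | zero => omega
  | succ n ih =>
    rcases Nat.eq_or_lt_of_le hp with h | h
    · -- n + 1 = 1
      have hn : n = 0 := by omega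
      subst hn
      rw [h1]
      push_cast
      rw [div_le_one hα0]
      linarith
    · have hn : 1 ≤ n := by omega
      have ihn := ih hn
      obtain ⟨hpos, heq⟩ := hrec n hn
      set c : ℝ := ((n:ℝ) + α - 1) / α with hcdef
      have hc1 : 1 ≤ c := by
        rw [hcdef, le_div_iff₀ hα0]
        have : (1:ℝ) ≤ n := by exact_mod_cast hn
        linarith
      have hcle : c ^ α ≤ τ n ^ α := by
        apply pow_le_pow_left₀ (by linarith) ihn
      have := tau_root_ge α hα c (τ (n+1)) hc1 hpos (by linarith)
      have hgoal : ((n:ℝ) + 1 + α - 1) / α = c + 1/α := by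
        rw [hcdef]; field_simp; ring
      push_cast
      rw [hgoal]
      exact this
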